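/- Let η₁ be a real number with −2 < η₁ < 2, set β₁ = √(2−η₁)/2, β₂ = √(2+η₁)/2 and Δ = √(4 − η₁²), and let h ≥ 0. Then ∫₀^∞ x sin(hx)/(x⁴ + η₁x² + 1) dx = (π/Δ) sin(hβ₁) e^{−hβ₂}. (This is the infinite-band three-dimensional FGC-SSRF covariance for |η₁| < 2: G_x(r) = (η₀/(2π)) e^{−hβ₂} sin(hβ₁)/(Δ h) with h = r/ξ, a damped-oscillatory, continuous but non-differentiable covariance model.) -/

import Mathlib

open MeasureTheory Real

section FGCAux

open Set Filter Complex FourierTransform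

lemma cexp_integrableOn (c : ℂ) (hc : c.re < 0) :
    IntegrableOn (fun x : ℝ => Complex.exp (c * x)) (Ioi 0) := by
  have hb : (0:ℝ) < -c.re := by linarith
  refine (Integrable.mono' (exp_neg_integrableOn_Ioi 0 hb) ?_ ?_)
  · exact (Complex.continuous_exp.comp (by fun_prop)).aestronglyMeasurable
  · filter_upwards with x
    simp only [Complex.norm_exp]
    have : (c * x).re = c.re * x := by simp [Complex.mul_re]
    rw [this]
    simp [mul_comm, neg_mul]

lemma integral_cexp_Ioi (c : ℂ) (hc : c.re < 0) :
    ∫ x in Ioi (0:ℝ), Complex.exp (c * x) = -c⁻¹ := by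
  have hc0 : c ≠ 0 := fun h => by simp [h] at hc
  have hlim : Tendsto (fun R : ℝ => ∫ x in (0:ℝ)..R, Complex.exp (c * x)) atTop
      (nhds (∫ x in Ioi (0:ℝ), Complex.exp (c * x))) :=
    intervalIntegral_tendsto_integral_Ioi 0 (cexp_integrableOn c hc) tendsto_id
  have heval : ∀ R : ℝ, (∫ x in (0:ℝ)..R, Complex.exp (c * x))
      = (Complex.exp (c * R) - 1) / c := by
    intro R; rw [integral_exp_mul_complex hc0]; simp
  have hlim2 : Tendsto (fun R : ℝ => (Complex.exp (c * R) - 1) / c) atTop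
      (nhds ((0 - 1)/c)) := by
    refine Tendsto.div_const (Tendsto.sub_const ?_ 1) c
    rw [tendsto_zero_iff_norm_tendsto_zero]
    have : ∀ R : ℝ, ‖Complex.exp (c * R)‖ = Real.exp (c.re * R) := by
      intro R
      simp [Complex.norm_exp, Complex.mul_re]
    simp only [this]
    exact Real.tendsto_exp_atBot.comp (tendsto_id.const_mul_atTop_of_neg hc)
  have heq := tendsto_nhds_unique ((tendsto_congr heval).mp hlim) hlim2
  rw [heq]; field_simp; norm_num

lemma expcos_integrableOn (a b : ℝ) (hb : 0 < b) :
    IntegrableOn (fun x : ℝ => Real.exp (-b * x) * Real.cos (a * x)) (Ioi 0) := by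
  refine (Integrable.mono' (exp_neg_integrableOn_Ioi 0 hb) ((Real.continuous_exp.comp (by fun_prop)).mul (Real.continuous_cos.comp (by fun_prop))).aestronglyMeasurable ?_)
  filter_upwards with x
  rw [norm_mul, Real.norm_eq_abs, Real.norm_eq_abs, Real.abs_exp]
  calc Real.exp (-b*x) * |Real.cos (a*x)| ≤ Real.exp (-b*x) * 1 := by
        gcongr; exact Real.abs_cos_le_one _
    _ = Real.exp (-b*x) := mul_one _

lemma integral_expcos (a b : ℝ) (hb : 0 < b) :
    ∫ x in Ioi (0:ℝ), Real.exp (-b * x) * Real.cos (a * x) = b / (b^2 + a^2) := by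
  set c : ℂ := -b + a * Complex.I with hcdef
  have hre : c.re = -b := by simp [hcdef]
  have hc : c.re < 0 := by rw [hre]; linarith
  have key := integral_cexp_Ioi c hc
  have hptwise : ∀ x : ℝ, (Complex.exp (c * x)).re = Real.exp (-b*x) * Real.cos (a*x) := by
    intro x
    rw [Complex.exp_re]
    congr 1
    · congr 1; simp [hcdef, Complex.mul_re]
    · congr 1; simp [hcdef, Complex.mul_im]
  have hint := cexp_integrableOn c hc
  calc ∫ x in Ioi (0:ℝ), Real.exp (-b * x) * Real.cos (a * x)
      = ∫ x in Ioi (0:ℝ), (Complex.exp (c * x)).re := by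
        exact setIntegral_congr_fun measurableSet_Ioi (fun x _ => (hptwise x).symm)
    _ = (∫ x in Ioi (0:ℝ), Complex.exp (c * x)).re := by
        rw [← RCLike.re_to_complex, ← integral_re hint]; rfl
    _ = (-c⁻¹).re := by rw [key]
    _ = b / (b^2 + a^2) := by
        rw [Complex.neg_re, Complex.inv_re]
        have : Complex.normSq c = b^2 + a^2 := by
          simp [Complex.normSq_apply, hcdef]; ring
        rw [this, hre]
        ring

lemma integral_sinsin (u b₁ b₂ : ℝ) (hb₂ : 0 < b₂) :
    ∫ x in Ioi (0:ℝ), Real.sin (u*x) * Real.sin (b₁*x) * Real.exp (-b₂*x)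
      = 2*u*b₁*b₂ / ((b₂^2 + (u-b₁)^2) * (b₂^2 + (u+b₁)^2)) := by
  have hptwise : ∀ x : ℝ, Real.sin (u*x) * Real.sin (b₁*x) * Real.exp (-b₂*x)
      = (Real.exp (-b₂*x) * Real.cos ((u-b₁)*x) - Real.exp (-b₂*x) * Real.cos ((u+b₁)*x)) / 2 := by
    intro x
    have h1 : Real.cos ((u-b₁)*x) = Real.cos (u*x - b₁*x) := by ring_nf
    have h2 : Real.cos ((u+b₁)*x) = Real.cos (u*x + b₁*x) := by ring_nf
    rw [h1, h2, Real.cos_sub, Real.cos_add]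
    ring
  rw [setIntegral_congr_fun measurableSet_Ioi (fun x _ => hptwise x)]
  rw [integral_div, integral_sub (expcos_integrableOn _ _ hb₂) (expcos_integrableOn _ _ hb₂),
    integral_expcos _ _ hb₂, integral_expcos _ _ hb₂]
  have d1 : (0:ℝ) < b₂^2 + (u-b₁)^2 := by positivity
  have d2 : (0:ℝ) < b₂^2 + (u+b₁)^2 := by positivity
  field_simp
  ring

lemma key_odd (g : ℝ → ℝ) (hint : Integrable g) (hodd : ∀ x, g (-x) = -g x) (t : ℝ) :
    ∫ x : ℝ, Complex.exp ((t*x : ℝ) * Complex.I) * (g x : ℂ)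
      = 2 * Complex.I * ((∫ x in Ioi (0:ℝ), Real.sin (t*x) * g x : ℝ) : ℂ) := by
  set F : ℝ → ℂ := fun x => Complex.exp ((t*x : ℝ) * Complex.I) * (g x : ℂ) with hF
  have hFint : Integrable F := by
    refine Integrable.bdd_mul (c := 1) hint.ofReal ?_ (Filter.Eventually.of_forall fun x => ?_)
    · exact (Complex.continuous_exp.comp (by fun_prop)).aestronglyMeasurable
    · rw [Complex.norm_exp]
      simp
  have hsplit : (∫ x in Iic (0:ℝ), F x) + (∫ x in Ioi (0:ℝ), F x) = ∫ x : ℝ, F x :=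
    intervalIntegral.integral_Iic_add_Ioi hFint.integrableOn hFint.integrableOn
  have hneg : (∫ x in Iic (0:ℝ), F x) = ∫ x in Ioi (0:ℝ), F (-x) := by
    rw [integral_comp_neg_Ioi]; simp
  have hcomb : ∀ x : ℝ, F (-x) + F x
      = 2 * Complex.I * ((Real.sin (t*x) * g x : ℝ) : ℂ) := by
    intro x
    simp only [hF, hodd, mul_neg, neg_neg]
    have e1 : Complex.exp ((-(t*x) : ℝ) * Complex.I)
        = (Real.cos (t*x) : ℂ) - (Real.sin (t*x) : ℂ) * Complex.I := by
      rw [Complex.exp_mul_I, ← Complex.ofReal_cos, ← Complex.ofReal_sin]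
      push_cast [Real.cos_neg, Real.sin_neg]
      ring
    have e2 : Complex.exp ((t*x : ℝ) * Complex.I)
        = (Real.cos (t*x) : ℂ) + (Real.sin (t*x) : ℂ) * Complex.I := by
      rw [Complex.exp_mul_I, ← Complex.ofReal_cos, ← Complex.ofReal_sin]
    rw [e1, e2]
    push_cast
    ring
  calc ∫ x : ℝ, F x = (∫ x in Iic (0:ℝ), F x) + (∫ x in Ioi (0:ℝ), F x) := hsplit.symm
    _ = (∫ x in Ioi (0:ℝ), F (-x)) + (∫ x in Ioi (0:ℝ), F x) := by rw [hneg]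
    _ = ∫ x in Ioi (0:ℝ), (F (-x) + F x) := by
        rw [integral_add ((hFint.comp_neg).integrableOn) hFint.integrableOn]
    _ = ∫ x in Ioi (0:ℝ), 2 * Complex.I * ((Real.sin (t*x) * g x : ℝ) : ℂ) := by
        exact setIntegral_congr_fun measurableSet_Ioi (fun x _ => hcomb x)
    _ = 2 * Complex.I * ((∫ x in Ioi (0:ℝ), Real.sin (t*x) * g x : ℝ) : ℂ) := by
        rw [integral_const_mul]
        congr 1
        exact integral_ofReal

set_option maxHeartbeats 1600000 in
/-- Infinite-band 3D FGC-SSRF covariance for |η₁| < 2: with β₁ = √(2−η₁)/2,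
β₂ = √(2+η₁)/2, Δ = √(4−η₁²) and h ≥ 0,
∫₀^∞ x sin(hx)/(x⁴ + η₁x² + 1) dx = (π/Δ) sin(hβ₁) e^{−hβ₂}. -/
theorem fgc_ssrf_covariance_three_dim_abs_lt_two
    (η₁ : ℝ) (hη : |η₁| < 2)
    (β₁ β₂ Δ : ℝ) (hβ₁ : β₁ = Real.sqrt (2 - η₁) / 2)
    (hβ₂ : β₂ = Real.sqrt (2 + η₁) / 2) (hΔ : Δ = Real.sqrt (4 - η₁ ^ 2))
    (h : ℝ) (hh : 0 ≤ h) :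
    ∫ x in Set.Ioi (0 : ℝ), x * Real.sin (h * x) / (x ^ 4 + η₁ * x ^ 2 + 1) =
      (π / Δ) * Real.sin (h * β₁) * Real.exp (-h * β₂) := by
  obtain ⟨hηl, hηr⟩ := abs_lt.mp hη
  have h2m : (0:ℝ) < 2 - η₁ := by linarith
  have h2p : (0:ℝ) < 2 + η₁ := by linarith
  have hb1 : 0 < β₁ := by rw [hβ₁]; positivity
  have hb2 : 0 < β₂ := by rw [hβ₂]; positivity
  have hb1sq : β₁^2 = (2 - η₁)/4 := by
    rw [hβ₁, div_pow, sq_sqrt h2m.le]; norm_num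
  have hb2sq : β₂^2 = (2 + η₁)/4 := by
    rw [hβ₂, div_pow, sq_sqrt h2p.le]; norm_num
  have hΔeq : Δ = 4 * β₁ * β₂ := by
    rw [hΔ, hβ₁, hβ₂, show (4:ℝ) - η₁^2 = (2-η₁)*(2+η₁) by ring,
      Real.sqrt_mul h2m.le]
    ring
  have hΔpos : 0 < Δ := by rw [hΔeq]; positivity
  -- factorization of the quartic
  have hfact : ∀ u : ℝ, (β₂^2 + (u-β₁)^2) * (β₂^2 + (u+β₁)^2) = u^4 + η₁*u^2 + 1 := by
    intro u
    rw [show (β₂^2 + (u-β₁)^2) * (β₂^2 + (u+β₁)^2)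
        = (β₁^2 + β₂^2 + u^2)^2 - 4*u^2*β₁^2 by ring, hb1sq, hb2sq]
    ring
  have hPpos : ∀ u : ℝ, 0 < u^4 + η₁*u^2 + 1 := by
    intro u; rw [← hfact u]; positivity
  have hc : 0 < 1 - |η₁|/2 := by linarith [hη]
  -- basic bound for integrability
  have hbound : ∀ u : ℝ, |u| / (u^4 + η₁*u^2 + 1) ≤ (1 - |η₁|/2)⁻¹ * (1 + u^2)⁻¹ := by
    intro u
    have habs := abs_nonneg η₁
    have h2 : |η₁| * u^2 ≤ |η₁| * ((u^4+1)/2) := by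
      gcongr; nlinarith [sq_nonneg (u^2 - 1)]
    have h3 : -(|η₁| * u^2) ≤ η₁ * u^2 := by nlinarith [neg_abs_le η₁, sq_nonneg u]
    have h1 : (1 - |η₁|/2) * (1 + u^4) ≤ u^4 + η₁*u^2 + 1 := by nlinarith [h2, h3]
    have ha2 : |u|^2 = u^2 := _root_.sq_abs u
    have ha4 : |u|^4 = u^4 := by
      rw [show |u|^4 = (|u|^2)^2 by ring, _root_.sq_abs]; ring
    have h2' : |u| * (1 + u^2) ≤ 1 + u^4 := by
      nlinarith [mul_nonneg (by positivity : (0:ℝ) ≤ |u|^2 + |u| + 1)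
        (sq_nonneg (|u| - 1)), abs_nonneg u, ha2, ha4]
    rw [div_le_iff₀ (hPpos u)]
    rw [show (1 - |η₁|/2)⁻¹ * (1+u^2)⁻¹ * (u^4 + η₁*u^2 + 1)
        = (u^4 + η₁*u^2 + 1) / ((1 - |η₁|/2) * (1+u^2)) by field_simp]
    rw [le_div_iff₀ (by positivity)]
    calc |u| * ((1 - |η₁|/2) * (1+u^2)) = (1 - |η₁|/2) * (|u| * (1+u^2)) := by ring
      _ ≤ (1 - |η₁|/2) * (1 + u^4) := by gcongr
      _ ≤ u^4 + η₁*u^2 + 1 := h1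
  -- the odd function whose Fourier transform we compute
  set g0 : ℝ → ℝ := fun x => Real.sin (β₁*x) * Real.exp (-β₂*|x|) with hg0def
  have hg0odd : ∀ x, g0 (-x) = -g0 x := by
    intro x; simp [hg0def, Real.sin_neg, abs_neg]
  have hg0cont : Continuous g0 := by
    apply Continuous.mul
    · exact Real.continuous_sin.comp (continuous_const.mul continuous_id)
    · exact Real.continuous_exp.comp ((continuous_const.mul continuous_abs))
  have hexpabs : Integrable (fun x : ℝ => Real.exp (-β₂*|x|)) := by
    have h1 : IntegrableOn (fun x : ℝ => Real.exp (-β₂*|x|)) (Ioi 0) := by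
      refine (exp_neg_integrableOn_Ioi 0 hb2).congr_fun ?_ measurableSet_Ioi
      intro x hx; simp only; rw [abs_of_pos hx]
    have h2 : IntegrableOn (fun x : ℝ => Real.exp (-β₂*|x|)) (Iic 0) := by
      rw [← Measure.map_neg_eq_self (volume : Measure ℝ)]
      have m : MeasurableEmbedding fun x : ℝ => -x := (Homeomorph.neg ℝ).measurableEmbedding
      rw [m.integrableOn_map_iff]
      simp_rw [Function.comp_def, abs_neg, neg_preimage, neg_Iic, neg_zero]
      exact (integrableOn_Ici_iff_integrableOn_Ioi).mpr h1
    rw [← integrableOn_univ, ← Iic_union_Ioi (a := (0:ℝ))]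
    exact h2.union h1
  have hg0int : Integrable g0 := by
    refine hexpabs.mono' hg0cont.aestronglyMeasurable ?_
    filter_upwards with x
    rw [Real.norm_eq_abs, hg0def, abs_mul, Real.abs_exp]
    calc |Real.sin (β₁*x)| * Real.exp (-β₂*|x|) ≤ 1 * Real.exp (-β₂*|x|) := by
          gcongr; exact Real.abs_sin_le_one _
      _ = Real.exp (-β₂*|x|) := one_mul _
  set f : ℝ → ℂ := fun x => ((g0 x : ℝ) : ℂ) with hfdef
  have hfcont : Continuous f := Complex.continuous_ofReal.comp hg0cont
  have hfint : Integrable f := hg0int.ofReal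
  -- the Fourier transform
  set G : ℝ → ℝ := fun ξ =>
    Δ * ((2*π*ξ) / ((2*π*ξ)^4 + η₁*(2*π*ξ)^2 + 1)) with hGdef
  have hGcont : Continuous G := by
    apply continuous_const.mul
    exact Continuous.div (by fun_prop) (by fun_prop) (fun ξ => (hPpos _).ne')
  have hGodd : ∀ ξ, G (-ξ) = -G ξ := by
    intro ξ
    simp only [hGdef]
    rw [show 2*π*(-ξ) = -(2*π*ξ) by ring,
      show (-(2*π*ξ))^4 = (2*π*ξ)^4 by ring, show (-(2*π*ξ))^2 = (2*π*ξ)^2 by ring,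
      neg_div]
    ring
  have hGint : Integrable G := by
    refine (integrable_inv_one_add_sq.const_mul (Δ * (1 - |η₁|/2)⁻¹)).mono'
      hGcont.aestronglyMeasurable ?_
    filter_upwards with ξ
    rw [Real.norm_eq_abs, hGdef, abs_mul, abs_of_pos hΔpos, abs_div]
    rw [abs_of_pos (hPpos (2*π*ξ))]
    have hb := hbound (2*π*ξ)
    have hmono : (1 + (2*π*ξ)^2)⁻¹ ≤ (1 + ξ^2)⁻¹ := by
      apply inv_anti₀ (by positivity)
      have h9 : (1:ℝ) ≤ 2^2*π^2 := by nlinarith [Real.pi_gt_three]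
      have : ξ^2 ≤ (2*π*ξ)^2 := by
        rw [mul_pow, mul_pow]
        nlinarith [mul_le_mul_of_nonneg_right h9 (sq_nonneg ξ)]
      linarith
    calc Δ * (|2*π*ξ| / ((2*π*ξ)^4 + η₁*(2*π*ξ)^2 + 1))
        ≤ Δ * ((1 - |η₁|/2)⁻¹ * (1 + (2*π*ξ)^2)⁻¹) := mul_le_mul_of_nonneg_left hb hΔpos.le
      _ ≤ Δ * ((1 - |η₁|/2)⁻¹ * (1 + ξ^2)⁻¹) := by
          gcongr
      _ = Δ * (1 - |η₁|/2)⁻¹ * (1 + ξ^2)⁻¹ := by ring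
  set F : ℝ → ℂ := fun ξ => (-Complex.I) * ((G ξ : ℝ) : ℂ) with hFdef
  have hFint : Integrable F := (hGint.ofReal).const_mul (-Complex.I)
  -- compute the Fourier transform of f
  have hfour : 𝓕 f = F := by
    funext ξ
    rw [Real.fourier_real_eq_integral_exp_smul]
    have hrw : ∀ v : ℝ, (-2*π*v*ξ) = (-(2*π*ξ))*v := fun v => by ring
    simp_rw [hrw, smul_eq_mul]
    rw [key_odd g0 hg0int hg0odd (-(2*π*ξ))]
    have hinner : ∫ x in Ioi (0:ℝ), Real.sin ((-(2*π*ξ))*x) * g0 x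
        = -(Δ/2 * ((2*π*ξ) / ((2*π*ξ)^4 + η₁*(2*π*ξ)^2 + 1))) := by
      have hcong : ∀ x ∈ Ioi (0:ℝ), Real.sin ((-(2*π*ξ))*x) * g0 x
          = -(Real.sin ((2*π*ξ)*x) * Real.sin (β₁*x) * Real.exp (-β₂*x)) := by
        intro x hx
        rw [hg0def]
        simp only
        rw [abs_of_pos hx, show (-(2*π*ξ))*x = -((2*π*ξ)*x) by ring, Real.sin_neg]
        ring
      rw [setIntegral_congr_fun measurableSet_Ioi hcong, integral_neg,
        integral_sinsin (2*π*ξ) β₁ β₂ hb2, hfact (2*π*ξ)]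
      rw [hΔeq]
      ring_nf
    rw [hinner, hFdef]
    simp only [hGdef]
    push_cast
    ring
  -- Fourier inversion
  have hinv : f h = 𝓕⁻ F h := by
    rw [← hfour, hfcont.fourierInv_fourier_eq hfint (hfour ▸ hFint)]
  -- compute the inverse Fourier integral
  set T : ℝ := ∫ x in Ioi (0:ℝ), Real.sin (h*x) * (x / (x^4 + η₁*x^2 + 1)) with hTdef
  have hinveval : 𝓕⁻ F h = 2 * ((Δ * ((2*π)⁻¹ * T) : ℝ) : ℂ) := by
    rw [Real.fourierInv_eq_fourier_neg,
      Real.fourier_real_eq_integral_exp_smul]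
    have hrw : ∀ v : ℝ, (-2*π*v*(-h)) = (2*π*h)*v := fun v => by ring
    simp_rw [hrw, smul_eq_mul, hFdef]
    have hpull : ∀ v : ℝ, Complex.exp (((2*π*h)*v : ℝ) * Complex.I)
        * ((-Complex.I) * ((G v : ℝ) : ℂ))
        = (-Complex.I) * (Complex.exp (((2*π*h)*v : ℝ) * Complex.I) * ((G v : ℝ) : ℂ)) :=
      fun v => by ring
    simp_rw [hpull]
    rw [integral_const_mul, key_odd G hGint hGodd (2*π*h)]
    have hinner : ∫ x in Ioi (0:ℝ), Real.sin ((2*π*h)*x) * G x = Δ * ((2*π)⁻¹ * T) := by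
      have hcong : ∀ x ∈ Ioi (0:ℝ), Real.sin ((2*π*h)*x) * G x
          = Δ * ((fun u => Real.sin (h*u) * (u / (u^4 + η₁*u^2 + 1))) ((2*π)*x)) := by
        intro x _
        simp only [hGdef]
        rw [show (2*π*h)*x = h*(2*π*x) by ring]
        ring
      rw [setIntegral_congr_fun measurableSet_Ioi hcong, integral_const_mul,
        integral_comp_mul_left_Ioi (fun u => Real.sin (h*u) * (u / (u^4 + η₁*u^2 + 1))) 0
          (by positivity : (0:ℝ) < 2*π)]
      rw [mul_zero, smul_eq_mul, hTdef]
    rw [hinner]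
    push_cast
    ring_nf
    rw [Complex.I_sq]
    ring
  -- extract the real identity
  have hreal : Real.sin (β₁*h) * Real.exp (-β₂*h) = 2 * (Δ * ((2*π)⁻¹ * T)) := by
    have := hinv.trans hinveval
    rw [hfdef] at this
    simp only [hg0def] at this
    rw [_root_.abs_of_nonneg hh] at this
    exact_mod_cast this
  -- finish
  have hgoal : ∫ x in Set.Ioi (0 : ℝ), x * Real.sin (h * x) / (x ^ 4 + η₁ * x ^ 2 + 1) = T := by
    rw [hTdef]
    refine setIntegral_congr_fun measurableSet_Ioi (fun x _ => ?_)
    ring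
  rw [hgoal]
  have hπ : (0:ℝ) < π := Real.pi_pos
  rw [show h*β₁ = β₁*h by ring, show -h*β₂ = -β₂*h by ring]
  field_simp at hreal ⊢
  linarith [hreal]

end FGCAux
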